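/- Let H be a Hilbert space, C : H → H a bounded operator, λ° ∈ ℂ, and suppose the inf-sup constant of M_{λ°} = I − λ°C over a closed subspace Z satisfies inf_{w∈Z} sup_{v∈Z} ⟨M_{λ°}w, v⟩/(‖w‖‖v‖) ≥ θ > 0 (and the transposed inf-sup condition also holds with the same bound). Then for every ν with |ν − λ°| ≤ θ/(2‖C‖), the operator M_ν = I − νC satisfies inf_{w∈Z} sup_{v∈Z} ⟨M_ν w, v⟩/(‖w‖‖v‖) ≥ θ/2, and P_Z M_ν|_Z is boundedly invertible on Z. -/

import Mathlib

open ContinuousLinearMap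

/-- Inner products against elements of `Z` only see the orthogonal projection onto `Z`. -/
lemma inner_proj_drop {H : Type*} [NormedAddCommGroup H] [InnerProductSpace ℂ H]
    (Z : Submodule ℂ H) [Z.HasOrthogonalProjection] (x : H) (v : Z) :
    (inner ℂ ((Z.orthogonalProjectionOnto x : Z) : H) ((v : Z) : H) : ℂ) = inner ℂ x (v : H) := by
  have h := Submodule.sub_starProjection_mem_orthogonal (K := Z) x
  have h2 : (inner ℂ (x - ((Z.orthogonalProjectionOnto x : Z) : H)) (v : H) : ℂ) = 0 := by
    rw [inner_eq_zero_symm]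
    exact (Z.mem_orthogonal _).mp h _ v.2
  rw [inner_sub_left, sub_eq_zero] at h2
  exact h2.symm

/-- The sup of `‖⟨x,v⟩‖/‖v‖` over `v ∈ Z` equals the norm of the projection of `x` onto `Z`. -/
lemma sup_inner_div_eq {H : Type*} [NormedAddCommGroup H] [InnerProductSpace ℂ H]
    (Z : Submodule ℂ H) [Z.HasOrthogonalProjection] (x : H) :
    (⨆ v : Z, ‖(inner ℂ x ((v : Z) : H) : ℂ)‖ / ‖((v : Z) : H)‖)
      = ‖((Z.orthogonalProjectionOnto x : Z) : H)‖ := by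
  set p : H := ((Z.orthogonalProjectionOnto x : Z) : H) with hp
  have hb : ∀ v : Z, ‖(inner ℂ x ((v : Z) : H) : ℂ)‖ / ‖((v : Z) : H)‖ ≤ ‖p‖ := by
    intro v
    rw [← inner_proj_drop Z x v]
    rcases eq_or_lt_of_le (norm_nonneg ((v : Z) : H)) with h0 | h0
    · rw [← h0, div_zero]; exact norm_nonneg _
    · rw [div_le_iff₀ h0]
      exact norm_inner_le_norm _ _
  have hbdd : BddAbove (Set.range fun v : Z =>
      ‖(inner ℂ x ((v : Z) : H) : ℂ)‖ / ‖((v : Z) : H)‖) :=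
    ⟨‖p‖, Set.forall_mem_range.mpr hb⟩
  refine le_antisymm (ciSup_le hb) ?_
  rcases eq_or_ne p 0 with h0 | h0
  · rw [h0, norm_zero]
    refine le_trans ?_ (le_ciSup hbdd (0 : Z))
    simp
  · refine le_trans ?_ (le_ciSup hbdd (Z.orthogonalProjectionOnto x))
    have h1 : (inner ℂ x ((Z.orthogonalProjectionOnto x : Z) : H) : ℂ) = (‖p‖ : ℂ) ^ 2 := by
      rw [← inner_proj_drop Z x (Z.orthogonalProjectionOnto x), ← hp]
      exact inner_self_eq_norm_sq_to_K p
    have hpn : ‖p‖ ≠ 0 := norm_ne_zero_iff.mpr h0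
    rw [h1, ← hp, norm_pow, Complex.norm_real, Real.norm_eq_abs, abs_norm, sq,
      mul_div_assoc, div_self hpn, mul_one]

/-- Abstract invertibility criterion on a Hilbert space: if `T` has a "formal adjoint" `S`
and both are bounded below, then `T` is invertible. -/
lemma exists_inverse_of_bddBelow {E : Type*} [NormedAddCommGroup E] [InnerProductSpace ℂ E]
    [CompleteSpace E] (T S : E →L[ℂ] E) (θ : ℝ) (hθ : 0 < θ)
    (hd : ∀ w v : E, (inner ℂ (T w) v : ℂ) = inner ℂ w (S v))
    (hT : ∀ w, θ * ‖w‖ ≤ ‖T w‖) (hS : ∀ v, θ * ‖v‖ ≤ ‖S v‖) :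
    ∃ N : E →L[ℂ] E, N.comp T = ContinuousLinearMap.id ℂ E ∧
      T.comp N = ContinuousLinearMap.id ℂ E := by
  have hker : LinearMap.ker (T : E →ₗ[ℂ] E) = ⊥ := by
    rw [LinearMap.ker_eq_bot']
    intro x hx
    have h1 := hT x
    rw [show T x = 0 from hx, norm_zero] at h1
    have : ‖x‖ = 0 := le_antisymm (by nlinarith [norm_nonneg x]) (norm_nonneg x)
    exact norm_eq_zero.mp this
  have hanti : AntilipschitzWith ⟨θ⁻¹, by positivity⟩ T := by
    apply ContinuousLinearMap.antilipschitz_of_bound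
    intro x
    have h1 := hT x
    show ‖x‖ ≤ θ⁻¹ * ‖T x‖
    rw [← div_eq_inv_mul, le_div_iff₀ hθ]
    linarith
  have hclosed : IsClosed ((LinearMap.range (T : E →ₗ[ℂ] E) : Submodule ℂ E) : Set E) := by
    have h := hanti.isClosed_range T.uniformContinuous
    have he : ((LinearMap.range (T : E →ₗ[ℂ] E) : Submodule ℂ E) : Set E) = Set.range T := by
      ext y; simp [LinearMap.mem_range]
    rwa [he]
  haveI : CompleteSpace (LinearMap.range (T : E →ₗ[ℂ] E) : Submodule ℂ E) := hclosed.completeSpace_coe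
  have hrange : LinearMap.range (T : E →ₗ[ℂ] E) = ⊤ := by
    rw [← Submodule.orthogonal_eq_bot_iff]
    rw [Submodule.eq_bot_iff]
    intro v hv
    have h1 : ∀ w, (inner ℂ w (S v) : ℂ) = 0 := by
      intro w
      rw [← hd]
      exact (Submodule.mem_orthogonal _ v).mp hv (T w) (LinearMap.mem_range_self _ w)
    have h2 : S v = 0 := inner_self_eq_zero.mp (h1 (S v))
    have h3 := hS v
    rw [h2, norm_zero] at h3
    have : ‖v‖ = 0 := le_antisymm (by nlinarith [norm_nonneg v]) (norm_nonneg v)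
    exact norm_eq_zero.mp this
  let e := ContinuousLinearEquiv.ofBijective T hker hrange
  have he : ∀ x, e x = T x := fun x => rfl
  refine ⟨e.symm.toContinuousLinearMap, ?_, ?_⟩
  · ext x
    simp only [ContinuousLinearMap.comp_apply, ContinuousLinearMap.id_apply,
      ContinuousLinearEquiv.coe_coe]
    rw [← he]
    exact e.symm_apply_apply x
  · ext x
    simp only [ContinuousLinearMap.comp_apply, ContinuousLinearMap.id_apply,
      ContinuousLinearEquiv.coe_coe]
    rw [← he]
    exact e.apply_symm_apply x

/-- Stability of the inf-sup condition of `M_ν = I - νC` on a closed subspace `Z`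
under perturbation of the spectral parameter: if the inf-sup constant of
`M_{λ₀}` on `Z` is at least `θ` (in both arguments), then for `|ν - λ₀| ≤ θ/(2‖C‖)`
the inf-sup constant of `M_ν` on `Z` is at least `θ/2`, and `P_Z M_ν |_Z` is
boundedly invertible on `Z`. -/
theorem infSup_perturbation_of_spectral_parameter
    {H : Type*} [NormedAddCommGroup H] [InnerProductSpace ℂ H] [CompleteSpace H]
    (C : H →L[ℂ] H) (lam₀ : ℂ) (θ : ℝ) (hθ : 0 < θ)
    (Z : Submodule ℂ H) (hZ : IsClosed (Z : Set H)) [Z.HasOrthogonalProjection]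
    (hinf : ∀ w : Z, θ * ‖(w : H)‖ ≤
      ⨆ v : Z, ‖(inner ℂ ((ContinuousLinearMap.id ℂ H - lam₀ • C) (w : H)) ((v : Z) : H) : ℂ)‖
        / ‖((v : Z) : H)‖)
    (hinf' : ∀ v : Z, θ * ‖(v : H)‖ ≤
      ⨆ w : Z, ‖(inner ℂ ((ContinuousLinearMap.id ℂ H - lam₀ • C) ((w : Z) : H)) (v : H) : ℂ)‖
        / ‖((w : Z) : H)‖) :
    ∀ ν : ℂ, ‖ν - lam₀‖ ≤ θ / (2 * ‖C‖) →
      (∀ w : Z, (θ / 2) * ‖(w : H)‖ ≤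
        ⨆ v : Z, ‖(inner ℂ ((ContinuousLinearMap.id ℂ H - ν • C) (w : H)) ((v : Z) : H) : ℂ)‖
          / ‖((v : Z) : H)‖) ∧
      ∃ N : Z →L[ℂ] Z,
        N.comp (Z.orthogonalProjectionOnto.comp
          ((ContinuousLinearMap.id ℂ H - ν • C).comp Z.subtypeL)) = ContinuousLinearMap.id ℂ Z ∧
        (Z.orthogonalProjectionOnto.comp
          ((ContinuousLinearMap.id ℂ H - ν • C).comp Z.subtypeL)).comp N =
            ContinuousLinearMap.id ℂ Z := by
  intro ν hν
  haveI : CompleteSpace Z := hZ.completeSpace_coe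
  set Cd : H →L[ℂ] H := ContinuousLinearMap.adjoint C with hCd
  have hCdnorm : ‖Cd‖ = ‖C‖ := by
    rw [hCd]
    exact LinearIsometryEquiv.norm_map ContinuousLinearMap.adjoint C
  -- the operators
  let M : ℂ → (H →L[ℂ] H) := fun μ => ContinuousLinearMap.id ℂ H - μ • C
  let M' : ℂ → (H →L[ℂ] H) := fun μ => ContinuousLinearMap.id ℂ H - (starRingEnd ℂ μ) • Cd
  let T : ℂ → (Z →L[ℂ] Z) := fun μ => Z.orthogonalProjectionOnto.comp ((M μ).comp Z.subtypeL)
  let S : ℂ → (Z →L[ℂ] Z) := fun μ => Z.orthogonalProjectionOnto.comp ((M' μ).comp Z.subtypeL)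
  -- duality between M and M'
  have hdual : ∀ (μ : ℂ) (w v : H), (inner ℂ ((M μ) w) v : ℂ) = inner ℂ w ((M' μ) v) := by
    intro μ w v
    simp only [M, M', ContinuousLinearMap.sub_apply, ContinuousLinearMap.id_apply,
      ContinuousLinearMap.smul_apply, inner_sub_left, inner_sub_right, inner_smul_left,
      inner_smul_right, ContinuousLinearMap.adjoint_inner_right, hCd]
  -- the sup in the first argument equals the norm of T μ
  have fact1 : ∀ (μ : ℂ) (w : Z),
      (⨆ v : Z, ‖(inner ℂ ((M μ) (w : H)) ((v : Z) : H) : ℂ)‖ / ‖((v : Z) : H)‖)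
        = ‖(((T μ) w : Z) : H)‖ :=
    fun μ w => sup_inner_div_eq Z ((M μ) (w : H))
  -- the sup in the second argument equals the norm of S μ
  have fact2 : ∀ (μ : ℂ) (v : Z),
      (⨆ w : Z, ‖(inner ℂ ((M μ) ((w : Z) : H)) (v : H) : ℂ)‖ / ‖((w : Z) : H)‖)
        = ‖(((S μ) v : Z) : H)‖ := by
    intro μ v
    have : ∀ w : Z, ‖(inner ℂ ((M μ) ((w : Z) : H)) (v : H) : ℂ)‖
        = ‖(inner ℂ ((M' μ) (v : H)) ((w : Z) : H) : ℂ)‖ := by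
      intro w
      rw [hdual, norm_inner_symm]
    calc (⨆ w : Z, ‖(inner ℂ ((M μ) ((w : Z) : H)) (v : H) : ℂ)‖ / ‖((w : Z) : H)‖)
        = ⨆ w : Z, ‖(inner ℂ ((M' μ) (v : H)) ((w : Z) : H) : ℂ)‖ / ‖((w : Z) : H)‖ := by
          exact iSup_congr fun w => by rw [this w]
      _ = ‖(((S μ) v : Z) : H)‖ := sup_inner_div_eq Z ((M' μ) (v : H))
  -- bounds at lam₀
  have hT0 : ∀ w : Z, θ * ‖(w : H)‖ ≤ ‖(((T lam₀) w : Z) : H)‖ := by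
    intro w; rw [← fact1 lam₀ w]; exact hinf w
  have hS0 : ∀ v : Z, θ * ‖(v : H)‖ ≤ ‖(((S lam₀) v : Z) : H)‖ := by
    intro v; rw [← fact2 lam₀ v]; exact hinf' v
  -- projection is a contraction
  have hPle : ∀ x : H, ‖((Z.orthogonalProjectionOnto x : Z) : H)‖ ≤ ‖x‖ := by
    intro x
    calc ‖((Z.orthogonalProjectionOnto x : Z) : H)‖ = ‖Z.orthogonalProjectionOnto x‖ := rfl
      _ ≤ ‖Z.orthogonalProjectionOnto‖ * ‖x‖ := Z.orthogonalProjectionOnto.le_opNorm x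
      _ ≤ 1 * ‖x‖ := by
          have := Submodule.orthogonalProjectionOnto_norm_le Z
          nlinarith [norm_nonneg x]
      _ = ‖x‖ := one_mul _
  -- key numeric bound
  have hCkey : ‖ν - lam₀‖ * ‖C‖ ≤ θ / 2 := by
    rcases eq_or_lt_of_le (norm_nonneg C) with h0 | h0
    · rw [← h0, mul_zero]; positivity
    · calc ‖ν - lam₀‖ * ‖C‖ ≤ (θ / (2 * ‖C‖)) * ‖C‖ := by
            exact mul_le_mul_of_nonneg_right hν (norm_nonneg C)
        _ = θ / 2 := by field_simp
  -- perturbation bounds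
  have hTpert : ∀ w : Z, ‖(((T ν) w : Z) : H) - (((T lam₀) w : Z) : H)‖ ≤ (θ / 2) * ‖(w : H)‖ := by
    intro w
    have hM : (M ν) (w : H) - (M lam₀) (w : H) = (lam₀ - ν) • C (w : H) := by
      simp only [M, ContinuousLinearMap.sub_apply, ContinuousLinearMap.id_apply,
        ContinuousLinearMap.smul_apply]
      rw [sub_smul]
      abel
    have hdiff : (T ν) w - (T lam₀) w
        = Z.orthogonalProjectionOnto ((lam₀ - ν) • C (w : H)) := by
      calc (T ν) w - (T lam₀) w
          = Z.orthogonalProjectionOnto ((M ν) (w : H) - (M lam₀) (w : H)) := by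
            rw [map_sub]; rfl
        _ = _ := by rw [hM]
    rw [← Submodule.coe_sub, hdiff]
    calc ‖((Z.orthogonalProjectionOnto ((lam₀ - ν) • C (w : H)) : Z) : H)‖
        ≤ ‖(lam₀ - ν) • C (w : H)‖ := hPle _
      _ = ‖lam₀ - ν‖ * ‖C (w : H)‖ := norm_smul _ _
      _ ≤ ‖ν - lam₀‖ * (‖C‖ * ‖(w : H)‖) := by
          rw [norm_sub_rev]
          exact mul_le_mul_of_nonneg_left (C.le_opNorm _) (norm_nonneg _)
      _ = (‖ν - lam₀‖ * ‖C‖) * ‖(w : H)‖ := by ring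
      _ ≤ (θ / 2) * ‖(w : H)‖ := mul_le_mul_of_nonneg_right hCkey (norm_nonneg _)
  have hSpert : ∀ v : Z, ‖(((S ν) v : Z) : H) - (((S lam₀) v : Z) : H)‖ ≤ (θ / 2) * ‖(v : H)‖ := by
    intro v
    have hM : (M' ν) (v : H) - (M' lam₀) (v : H)
        = (starRingEnd ℂ lam₀ - starRingEnd ℂ ν) • Cd (v : H) := by
      simp only [M', ContinuousLinearMap.sub_apply, ContinuousLinearMap.id_apply,
        ContinuousLinearMap.smul_apply]
      rw [sub_smul]
      abel
    have hdiff : (S ν) v - (S lam₀) v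
        = Z.orthogonalProjectionOnto ((starRingEnd ℂ lam₀ - starRingEnd ℂ ν) • Cd (v : H)) := by
      calc (S ν) v - (S lam₀) v
          = Z.orthogonalProjectionOnto ((M' ν) (v : H) - (M' lam₀) (v : H)) := by
            rw [map_sub]; rfl
        _ = _ := by rw [hM]
    rw [← Submodule.coe_sub, hdiff]
    calc ‖((Z.orthogonalProjectionOnto ((starRingEnd ℂ lam₀ - starRingEnd ℂ ν) • Cd (v : H)) : Z) : H)‖
        ≤ ‖(starRingEnd ℂ lam₀ - starRingEnd ℂ ν) • Cd (v : H)‖ := hPle _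
      _ = ‖starRingEnd ℂ lam₀ - starRingEnd ℂ ν‖ * ‖Cd (v : H)‖ := norm_smul _ _
      _ ≤ ‖ν - lam₀‖ * (‖C‖ * ‖(v : H)‖) := by
          have h1 : ‖starRingEnd ℂ lam₀ - starRingEnd ℂ ν‖ = ‖ν - lam₀‖ := by
            rw [← map_sub, RCLike.norm_conj, norm_sub_rev]
          rw [h1]
          refine mul_le_mul_of_nonneg_left ?_ (norm_nonneg _)
          calc ‖Cd (v : H)‖ ≤ ‖Cd‖ * ‖(v : H)‖ := Cd.le_opNorm _
            _ = ‖C‖ * ‖(v : H)‖ := by rw [hCdnorm]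
      _ = (‖ν - lam₀‖ * ‖C‖) * ‖(v : H)‖ := by ring
      _ ≤ (θ / 2) * ‖(v : H)‖ := mul_le_mul_of_nonneg_right hCkey (norm_nonneg _)
  -- bounds at ν
  have hTν : ∀ w : Z, (θ / 2) * ‖(w : H)‖ ≤ ‖(((T ν) w : Z) : H)‖ := by
    intro w
    have h1 := hT0 w
    have h2 := hTpert w
    have h3 : ‖(((T lam₀) w : Z) : H)‖ - ‖(((T ν) w : Z) : H)‖
        ≤ ‖(((T ν) w : Z) : H) - (((T lam₀) w : Z) : H)‖ := by
      rw [norm_sub_rev]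
      exact norm_sub_norm_le _ _
    linarith
  have hSν : ∀ v : Z, (θ / 2) * ‖(v : H)‖ ≤ ‖(((S ν) v : Z) : H)‖ := by
    intro v
    have h1 := hS0 v
    have h2 := hSpert v
    have h3 : ‖(((S lam₀) v : Z) : H)‖ - ‖(((S ν) v : Z) : H)‖
        ≤ ‖(((S ν) v : Z) : H) - (((S lam₀) v : Z) : H)‖ := by
      rw [norm_sub_rev]
      exact norm_sub_norm_le _ _
    linarith
  constructor
  · intro w
    rw [show (⨆ v : Z, ‖(inner ℂ ((ContinuousLinearMap.id ℂ H - ν • C) (w : H)) ((v : Z) : H) : ℂ)‖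
        / ‖((v : Z) : H)‖) = ‖(((T ν) w : Z) : H)‖ from fact1 ν w]
    exact hTν w
  · -- duality between T ν and S ν on Z
    have hdZ : ∀ w v : Z, (inner ℂ ((T ν) w) v : ℂ) = inner ℂ w ((S ν) v) := by
      intro w v
      calc (inner ℂ ((T ν) w) v : ℂ)
          = inner ℂ (((T ν) w : Z) : H) ((v : Z) : H) := Z.coe_inner _ _
        _ = inner ℂ ((M ν) (w : H)) ((v : Z) : H) := inner_proj_drop Z _ v
        _ = inner ℂ ((w : Z) : H) ((M' ν) (v : H)) := hdual ν _ _
        _ = starRingEnd ℂ (inner ℂ ((M' ν) (v : H)) ((w : Z) : H)) := (inner_conj_symm _ _).symm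
        _ = starRingEnd ℂ (inner ℂ (((S ν) v : Z) : H) ((w : Z) : H)) :=
            congrArg _ (inner_proj_drop Z ((M' ν) (v : H)) w).symm
        _ = inner ℂ ((w : Z) : H) (((S ν) v : Z) : H) := inner_conj_symm _ _
        _ = inner ℂ w ((S ν) v) := (Z.coe_inner _ _).symm
    have hinv := exists_inverse_of_bddBelow (T ν) (S ν) (θ / 2) (by positivity) hdZ
      (fun w => hTν w) (fun v => hSν v)
    exact hinv
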